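/- arXiv:math/0209146 — 6 statements merged into one kernel-verified Lean document; each statement's English description precedes it below -/
import Mathlib

section
/- Under hypotheses (i)–(vi), there exists a positive constant c5 such that almost surely limsup_{n→∞} X_n/n > c5. -/
set_option maxHeartbeats 1000000

open MeasureTheory Filter

/-- Lemma 2 ("technical lemma"): under hypotheses (i)–(vi) there is a positive
constant `c5` such that almost surely `limsup Xₙ/n > c5`. -/
theorem technical_lemma {Ω : Type*} {m0 : MeasurableSpace Ω} {μ : Measure Ω}
    [IsProbabilityMeasure μ] (ℱ : Filtration ℕ m0)
    (hF0 : ∀ s : Set Ω, MeasurableSet[ℱ 0] s → μ s = 0 ∨ μ s = 1)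
    (X f : ℕ → Ω → ℝ) (A : ℕ → Set Ω)
    (hXadp : ∀ n, StronglyMeasurable[ℱ n] (X n))
    (hfadp : ∀ n, StronglyMeasurable[ℱ n] (f n))
    (hAmeas : ∀ n, MeasurableSet[ℱ n] (A n))
    (hXint : ∀ n, Integrable (X n) μ)
    (hfint : ∀ n, Integrable (f n) μ)
    (c1 c2 c3 c4 : ℝ) (hc1 : 0 < c1) (hc2 : 0 < c2) (hc3 : 0 < c3) (hc4 : 0 < c4)
    (m : ℕ) (hm : 0 < m)
    (h1 : ∀ n, ∀ᵐ ω ∂μ, |X (n + 1) ω - X n ω| ≤ 1)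
    (h2 : ∀ n, 0 ≤ᵐ[μ] μ[fun ω => X (n + 1) ω - X n ω | ℱ n])
    (h3 : ∀ n, ∀ᵐ ω ∂μ, ω ∈ A n → c1 < (μ[fun ω => X (n + m) ω - X n ω | ℱ n]) ω)
    (h4 : ∀ n, ∀ᵐ ω ∂μ, -c2 < f n ω)
    (h5 : ∀ n, ∀ᵐ ω ∂μ,
      (f (n + 1) ω - f n ω) * (A n).indicator (fun _ => (1 : ℝ)) ω < c3)
    (h6 : ∀ n, ∀ᵐ ω ∂μ, ω ∉ A n →
      (μ[fun ω => f (n + 1) ω - f n ω | ℱ n]) ω < -c4) :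
    ∃ c5 : ℝ, 0 < c5 ∧
      ∀ᵐ ω ∂μ, c5 < atTop.limsup (fun n => X n ω / n) := by
  classical
  -- constants
  set cc : ℕ := ⌈(c3 + c4) * m / c4⌉₊ with hcc_def
  set L : ℕ := m + cc with hL_def
  set β : ℝ := c4 * L - (c3 + c4) * m with hβ_def
  set κ : ℝ := (c3 + c4) * (cc + 1) / c1 with hκ_def
  have hc34 : 0 < c3 + c4 := add_pos hc3 hc4
  have hccR : (c3 + c4) * m / c4 ≤ (cc : ℝ) := Nat.le_ceil _
  have hβ_ge : c4 * m ≤ β := by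
    rw [div_le_iff₀ hc4] at hccR
    have hLcast : (L : ℝ) = (m : ℝ) + cc := by push_cast [hL_def]; ring
    rw [hβ_def, hLcast]; nlinarith
  have hβpos : 0 < β := lt_of_lt_of_le (by positivity) hβ_ge
  have hκpos : 0 < κ := by
    rw [hκ_def]; positivity
  have hLpos : 0 < L := by omega
  set ε : ℝ := β / (2 * κ * L) with hε_def
  have hεpos : 0 < ε := by
    rw [hε_def]; positivity
  have hεκL : κ * ε * L = β / 2 := by
    rw [hε_def]; field_simp
  -- basic integrability
  have hAm0 : ∀ s, MeasurableSet (A s) := fun s => ℱ.le s _ (hAmeas s)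
  have hIint : ∀ s, Integrable ((A s).indicator (fun _ => (1 : ℝ))) μ :=
    fun s => (integrable_const 1).indicator (hAm0 s)
  have hΔfint : ∀ s, Integrable (fun ω => f (s + 1) ω - f s ω) μ :=
    fun s => (hfint _).sub (hfint _)
  have hΔXint : ∀ s n, Integrable (fun ω => X (s + n) ω - X s ω) μ :=
    fun s n => (hXint _).sub (hXint _)
  -- conditional probabilities of A
  set q : ℕ → ℕ → Ω → ℝ :=
    fun n s => μ[(A s).indicator (fun _ => (1 : ℝ)) | ℱ n] with hq_def
  have hq0 : ∀ n s, 0 ≤ᵐ[μ] q n s := fun n s =>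
    condExp_nonneg (Eventually.of_forall fun ω => Set.indicator_nonneg (fun _ _ => zero_le_one) ω)
  have hq1 : ∀ n s, q n s ≤ᵐ[μ] fun _ => (1 : ℝ) := by
    intro n s
    have h := condExp_mono (μ := μ) (m := ℱ n) (hIint s) (integrable_const (1 : ℝ))
      (Eventually.of_forall fun ω => Set.indicator_le_self' (fun _ _ => zero_le_one) ω)
    rwa [condExp_const (ℱ.le n) (1 : ℝ)] at h
  -- Step A : per-step drift of f at its own time
  have hfd : ∀ s, μ[(fun ω => f (s + 1) ω - f s ω) | ℱ s] ≤ᵐ[μ]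
      fun ω => (c3 + c4) * (A s).indicator (fun _ => (1 : ℝ)) ω - c4 := by
    intro s
    have hind : μ[(A s).indicator (fun ω => f (s + 1) ω - f s ω) | ℱ s]
        =ᵐ[μ] (A s).indicator (μ[(fun ω => f (s + 1) ω - f s ω) | ℱ s]) :=
      condExp_indicator (hΔfint s) (hAmeas s)
    have hptwise : (A s).indicator (fun ω => f (s + 1) ω - f s ω)
        ≤ᵐ[μ] (A s).indicator (fun _ => c3) := by
      filter_upwards [h5 s] with ω h5ω
      by_cases hω : ω ∈ A s
      · have hlt : f (s + 1) ω - f s ω < c3 := by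
          simpa [Set.indicator_of_mem hω] using h5ω
        simpa [Set.indicator_of_mem hω] using hlt.le
      · simp [Set.indicator_of_notMem hω]
    have hmono : μ[(A s).indicator (fun ω => f (s + 1) ω - f s ω) | ℱ s]
        ≤ᵐ[μ] (A s).indicator (fun _ => c3) := by
      have h := condExp_mono (μ := μ) (m := ℱ s) ((hΔfint s).indicator (hAm0 s))
        ((integrable_const c3).indicator (hAm0 s)) hptwise
      rwa [condExp_of_stronglyMeasurable (ℱ.le s)
        (stronglyMeasurable_const.indicator (hAmeas s))
        ((integrable_const c3).indicator (hAm0 s))] at h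
    have hA : (A s).indicator (μ[(fun ω => f (s + 1) ω - f s ω) | ℱ s])
        ≤ᵐ[μ] (A s).indicator (fun _ => c3) := hind.symm.trans_le hmono
    filter_upwards [hA, h6 s] with ω hAω h6ω
    by_cases hω : ω ∈ A s
    · have := hAω
      rw [Set.indicator_of_mem hω, Set.indicator_of_mem hω] at this
      simp [Set.indicator_of_mem hω]; linarith
    · have := h6ω hω
      simp [Set.indicator_of_notMem hω]; linarith
  -- Step B : f drift, conditioned at earlier time
  have hfdn : ∀ n s, n ≤ s → μ[(fun ω => f (s + 1) ω - f s ω) | ℱ n] ≤ᵐ[μ]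
      fun ω => (c3 + c4) * q n s ω - c4 := by
    intro n s hns
    have htower : μ[(fun ω => f (s + 1) ω - f s ω) | ℱ n]
        =ᵐ[μ] μ[μ[(fun ω => f (s + 1) ω - f s ω) | ℱ s] | ℱ n] :=
      (condExp_condExp_of_le (ℱ.mono hns) (ℱ.le s)).symm
    have hmono : μ[μ[(fun ω => f (s + 1) ω - f s ω) | ℱ s] | ℱ n]
        ≤ᵐ[μ] μ[(fun ω => (c3 + c4) * (A s).indicator (fun _ => (1 : ℝ)) ω - c4) | ℱ n] :=
      condExp_mono integrable_condExp
        (((hIint s).const_mul (c3 + c4)).sub (integrable_const c4)) (hfd s)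
    have hsplit : μ[(fun ω => (c3 + c4) * (A s).indicator (fun _ => (1 : ℝ)) ω - c4) | ℱ n]
        =ᵐ[μ] fun ω => (c3 + c4) * q n s ω - c4 := by
      have h₁ : μ[(fun ω => (c3 + c4) * (A s).indicator (fun _ => (1 : ℝ)) ω - c4) | ℱ n]
          =ᵐ[μ] μ[(fun ω => (c3 + c4) * (A s).indicator (fun _ => (1 : ℝ)) ω) | ℱ n]
            - μ[(fun _ => c4) | ℱ n] :=
        condExp_sub ((hIint s).const_mul (c3 + c4)) (integrable_const c4) _
      have h₂ : μ[(fun ω => (c3 + c4) * (A s).indicator (fun _ => (1 : ℝ)) ω) | ℱ n]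
          =ᵐ[μ] (c3 + c4) • μ[(A s).indicator (fun _ => (1 : ℝ)) | ℱ n] := by
        have := condExp_smul (μ := μ) (m := ℱ n) (c3 + c4)
          ((A s).indicator (fun _ => (1 : ℝ)))
        simpa [smul_eq_mul, Pi.smul_def] using this
      filter_upwards [h₁, h₂] with ω hω₁ hω₂
      have hc : (μ[(fun _ => c4) | ℱ n]) ω = c4 := by
        rw [condExp_const (ℱ.le n) c4]
      simp only [hω₁, Pi.sub_apply, hω₂, Pi.smul_apply, smul_eq_mul, hc, hq_def]
    exact htower.trans_le (hmono.trans hsplit.le)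

  -- Step C : X has nonnegative one-step drift seen from earlier times
  have hX0 : ∀ n s, n ≤ s → 0 ≤ᵐ[μ] μ[(fun ω => X (s + 1) ω - X s ω) | ℱ n] := by
    intro n s hns
    have htower : μ[(fun ω => X (s + 1) ω - X s ω) | ℱ n]
        =ᵐ[μ] μ[μ[(fun ω => X (s + 1) ω - X s ω) | ℱ s] | ℱ n] :=
      (condExp_condExp_of_le (ℱ.mono hns) (ℱ.le s)).symm
    have hnn : 0 ≤ᵐ[μ] μ[μ[(fun ω => X (s + 1) ω - X s ω) | ℱ s] | ℱ n] :=
      condExp_nonneg (h2 s)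
    filter_upwards [htower, hnn] with ω hω₁ hω₂
    rw [hω₁]; exact hω₂
  -- telescoping of X over a window, under condexp
  have hXtel : ∀ n a b, a ≤ b → μ[(fun ω => X b ω - X a ω) | ℱ n]
      =ᵐ[μ] ∑ l ∈ Finset.Ico a b, μ[(fun ω => X (l + 1) ω - X l ω) | ℱ n] := by
    intro n a b hab
    have hfun : (fun ω => X b ω - X a ω)
        = fun ω => ∑ l ∈ Finset.Ico a b, (X (l + 1) ω - X l ω) := by
      funext ω
      rw [Finset.sum_Ico_eq_sub _ hab, Finset.sum_range_sub (fun l => X l ω),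
        Finset.sum_range_sub (fun l => X l ω)]
      ring
    have : (fun ω => X b ω - X a ω)
        = ∑ l ∈ Finset.Ico a b, fun ω => (X (l + 1) ω - X l ω) := by
      rw [hfun]; funext ω; rw [Finset.sum_apply]
    rw [this]
    exact condExp_finset_sum (fun l _ => (hXint _).sub (hXint _)) _
  -- Step D : the m-window drift bound at its own time
  have hXw0 : ∀ w, (fun ω => c1 * (A w).indicator (fun _ => (1 : ℝ)) ω)
      ≤ᵐ[μ] μ[(fun ω => X (w + m) ω - X w ω) | ℱ w] := by
    intro w
    have hnn : 0 ≤ᵐ[μ] μ[(fun ω => X (w + m) ω - X w ω) | ℱ w] := by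
      have htel := hXtel w w (w + m) (Nat.le_add_right _ _)
      have hterm : ∀ l, l ∈ Finset.Ico w (w + m) →
          (0 : Ω → ℝ) ≤ᵐ[μ] μ[(fun ω => X (l + 1) ω - X l ω) | ℱ w] := by
        intro l hl
        exact hX0 w l (Finset.mem_Ico.1 hl).1
      have : ∀ᵐ ω ∂μ, ∀ l ∈ Finset.Ico w (w + m),
          0 ≤ (μ[(fun ω => X (l + 1) ω - X l ω) | ℱ w]) ω := by
        rw [Filter.eventually_all_finset]
        intro l hl
        exact hterm l hl
      filter_upwards [htel, this] with ω hω₁ hω₂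
      rw [hω₁, Finset.sum_apply]
      exact Finset.sum_nonneg fun l hl => hω₂ l hl
    filter_upwards [hnn, h3 w] with ω hω₁ hω₂
    by_cases hω : ω ∈ A w
    · rw [Set.indicator_of_mem hω]
      have := hω₂ hω
      linarith
    · rw [Set.indicator_of_notMem hω]
      simpa using hω₁
  -- Step D' : window drift bound seen from earlier times
  have hXw : ∀ n w, n ≤ w → (fun ω => c1 * q n w ω)
      ≤ᵐ[μ] μ[(fun ω => X (w + m) ω - X w ω) | ℱ n] := by
    intro n w hnw
    have htower : μ[(fun ω => X (w + m) ω - X w ω) | ℱ n]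
        =ᵐ[μ] μ[μ[(fun ω => X (w + m) ω - X w ω) | ℱ w] | ℱ n] :=
      (condExp_condExp_of_le (ℱ.mono hnw) (ℱ.le w)).symm
    have hmono : μ[(fun ω => c1 * (A w).indicator (fun _ => (1 : ℝ)) ω) | ℱ n]
        ≤ᵐ[μ] μ[μ[(fun ω => X (w + m) ω - X w ω) | ℱ w] | ℱ n] :=
      condExp_mono (μ := μ) (m := ℱ n) ((hIint w).const_mul c1)
        integrable_condExp (hXw0 w)
    have hsmul : μ[(fun ω => c1 * (A w).indicator (fun _ => (1 : ℝ)) ω) | ℱ n]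
        =ᵐ[μ] fun ω => c1 * q n w ω := by
      have hthis := condExp_smul (μ := μ) (m := ℱ n) c1 ((A w).indicator (fun _ => (1 : ℝ)))
      have harg : c1 • ((A w).indicator (fun _ => (1 : ℝ)))
          = fun ω => c1 * (A w).indicator (fun _ => (1 : ℝ)) ω := by
        funext ω; simp [smul_eq_mul]
      rw [harg] at hthis
      filter_upwards [hthis] with ω hω
      rw [hω]; simp [hq_def, smul_eq_mul]
    filter_upwards [htower, hmono, hsmul] with ω hω₁ hω₂ hω₃
    rw [hω₁, ← hω₃]
    exact hω₂
  -- Core block drift estimate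
  have hcore : ∀ n, μ[(fun ω => (f (n + L) ω - f n ω) + β - κ * (X (n + L) ω - X n ω)) | ℱ n]
      ≤ᵐ[μ] fun _ => (0 : ℝ) := by
    intro n
    have hFint : Integrable (fun ω => f (n + L) ω - f n ω) μ := (hfint _).sub (hfint _)
    have hGint : Integrable (fun ω => X (n + L) ω - X n ω) μ := (hXint _).sub (hXint _)
    -- decompose the conditional expectation
    have hdecomp : μ[(fun ω => (f (n + L) ω - f n ω) + β - κ * (X (n + L) ω - X n ω)) | ℱ n]
        =ᵐ[μ] fun ω => (μ[(fun ω => f (n + L) ω - f n ω) | ℱ n]) ω + β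
          - κ * (μ[(fun ω => X (n + L) ω - X n ω) | ℱ n]) ω := by
      have e1 : (fun ω => (f (n + L) ω - f n ω) + β - κ * (X (n + L) ω - X n ω))
          = ((fun ω => f (n + L) ω - f n ω) + (fun _ => β))
            - (fun ω => κ * (X (n + L) ω - X n ω)) := rfl
      have hsub := condExp_sub (μ := μ) (m := ℱ n) (hFint.add (integrable_const β))
        (hGint.const_mul κ)
      rw [← e1] at hsub
      have hadd := condExp_add (μ := μ) (m := ℱ n) hFint (integrable_const β)
      have hsmul := condExp_smul (μ := μ) (m := ℱ n) κ (fun ω => X (n + L) ω - X n ω)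
      have e3 : κ • (fun ω => X (n + L) ω - X n ω) = fun ω => κ * (X (n + L) ω - X n ω) := by
        funext ω; simp [smul_eq_mul]
      rw [e3] at hsmul
      filter_upwards [hsub, hadd, hsmul] with ω hω₁ hω₂ hω₃
      rw [hω₁]
      simp only [Pi.sub_apply, hω₂, Pi.add_apply, hω₃, Pi.smul_apply, smul_eq_mul,
        condExp_const (ℱ.le n) β]
    -- bound for the f block
    have htelf : μ[(fun ω => f (n + L) ω - f n ω) | ℱ n]
        =ᵐ[μ] ∑ j ∈ Finset.range L, μ[(fun ω => f (n + j + 1) ω - f (n + j) ω) | ℱ n] := by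
      have hfun : (fun ω => f (n + L) ω - f n ω)
          = ∑ j ∈ Finset.range L, fun ω => f (n + j + 1) ω - f (n + j) ω := by
        funext ω
        rw [Finset.sum_apply]
        have h := Finset.sum_range_sub (fun j => f (n + j) ω) L
        simpa [add_assoc] using h.symm
      rw [hfun]
      exact condExp_finset_sum (fun j _ => (hfint _).sub (hfint _)) _
    have hEf : μ[(fun ω => f (n + L) ω - f n ω) | ℱ n]
        ≤ᵐ[μ] fun ω => ∑ j ∈ Finset.range L, ((c3 + c4) * q n (n + j) ω - c4) := by
      have hterms : ∀ᵐ ω ∂μ, ∀ j ∈ Finset.range L,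
          (μ[(fun ω => f (n + j + 1) ω - f (n + j) ω) | ℱ n]) ω
            ≤ (c3 + c4) * q n (n + j) ω - c4 := by
        rw [Filter.eventually_all_finset]
        intro j _
        exact hfdn n (n + j) (Nat.le_add_right _ _)
      filter_upwards [htelf, hterms] with ω hω₁ hω₂
      rw [hω₁, Finset.sum_apply]
      exact Finset.sum_le_sum fun j hj => hω₂ j hj
    -- the X block dominates each window
    have hEXwin : ∀ᵐ ω ∂μ, ∀ j ∈ Finset.range (cc + 1),
        c1 * q n (n + j) ω ≤ (μ[(fun ω => X (n + L) ω - X n ω) | ℱ n]) ω := by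
      rw [Filter.eventually_all_finset]
      intro j hj
      have hjcc : j ≤ cc := by simpa [Nat.lt_succ_iff] using Finset.mem_range.1 hj
      have hwin := hXw n (n + j) (Nat.le_add_right _ _)
      have htelw := hXtel n (n + j) (n + j + m) (Nat.le_add_right _ _)
      have htelL := hXtel n n (n + L) (Nat.le_add_right _ _)
      have hnn : ∀ᵐ ω ∂μ, ∀ l ∈ Finset.Ico n (n + L),
          0 ≤ (μ[(fun ω => X (l + 1) ω - X l ω) | ℱ n]) ω := by
        rw [Filter.eventually_all_finset]
        intro l hl
        exact hX0 n l (Finset.mem_Ico.1 hl).1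
      filter_upwards [hwin, htelw, htelL, hnn] with ω hω₁ hω₂ hω₃ hω₄
      have hsub : Finset.Ico (n + j) (n + j + m) ⊆ Finset.Ico n (n + L) := by
        intro l hl
        rw [Finset.mem_Ico] at hl ⊢
        constructor
        · omega
        · have : j + m ≤ L := by omega
          omega
      calc c1 * q n (n + j) ω
          ≤ (μ[(fun ω => X (n + j + m) ω - X (n + j) ω) | ℱ n]) ω := hω₁
        _ = ∑ l ∈ Finset.Ico (n + j) (n + j + m),
              (μ[(fun ω => X (l + 1) ω - X l ω) | ℱ n]) ω := by
            rw [hω₂, Finset.sum_apply]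
        _ ≤ ∑ l ∈ Finset.Ico n (n + L),
              (μ[(fun ω => X (l + 1) ω - X l ω) | ℱ n]) ω := by
            exact Finset.sum_le_sum_of_subset_of_nonneg hsub fun l hl _ => hω₄ l hl
        _ = (μ[(fun ω => X (n + L) ω - X n ω) | ℱ n]) ω := by
            rw [hω₃, Finset.sum_apply]
    -- q bounds
    have hQ1 : ∀ᵐ ω ∂μ, ∀ j ∈ Finset.range L, q n (n + j) ω ≤ 1 := by
      rw [Filter.eventually_all_finset]
      intro j _
      exact hq1 n (n + j)
    -- final pointwise combination
    filter_upwards [hdecomp, hEf, hEXwin, hQ1] with ω hdec hEfω hwinω hQ1ω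
    rw [hdec]
    have hsumwin : c1 * ∑ j ∈ Finset.range (cc + 1), q n (n + j) ω
        ≤ (cc + 1 : ℝ) * ((μ[(fun ω => X (n + L) ω - X n ω) | ℱ n]) ω) := by
      rw [Finset.mul_sum]
      calc ∑ j ∈ Finset.range (cc + 1), c1 * q n (n + j) ω
          ≤ ∑ _j ∈ Finset.range (cc + 1),
              (μ[(fun ω => X (n + L) ω - X n ω) | ℱ n]) ω :=
            Finset.sum_le_sum fun j hj => hwinω j hj
        _ = (cc + 1 : ℝ) * ((μ[(fun ω => X (n + L) ω - X n ω) | ℱ n]) ω) := by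
            rw [Finset.sum_const, Finset.card_range]
            push_cast
            ring
    have hκD : (c3 + c4) * ∑ j ∈ Finset.range (cc + 1), q n (n + j) ω
        ≤ κ * ((μ[(fun ω => X (n + L) ω - X n ω) | ℱ n]) ω) := by
      rw [hκ_def, div_mul_eq_mul_div, le_div_iff₀ hc1]
      nlinarith [mul_le_mul_of_nonneg_left hsumwin hc34.le]
    have hsplitQ : ∑ j ∈ Finset.range L, q n (n + j) ω
        = ∑ j ∈ Finset.range (cc + 1), q n (n + j) ω
          + ∑ j ∈ Finset.Ico (cc + 1) L, q n (n + j) ω := by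
      rw [Finset.sum_range_add_sum_Ico _ (by omega : cc + 1 ≤ L)]
    have hEfb : (μ[(fun ω => f (n + L) ω - f n ω) | ℱ n]) ω
        ≤ (c3 + c4) * (∑ j ∈ Finset.range (cc + 1), q n (n + j) ω
            + ∑ j ∈ Finset.Ico (cc + 1) L, q n (n + j) ω) - c4 * L := by
      refine hEfω.trans ?_
      rw [← hsplitQ, Finset.sum_sub_distrib, Finset.mul_sum, Finset.sum_const,
        Finset.card_range]
      simp only [nsmul_eq_mul]
      linarith
    have htail : ∑ j ∈ Finset.Ico (cc + 1) L, q n (n + j) ω ≤ (m : ℝ) - 1 := by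
      have hb : ∀ j ∈ Finset.Ico (cc + 1) L, q n (n + j) ω ≤ 1 := by
        intro j hj
        have hjL : j < L := (Finset.mem_Ico.1 hj).2
        exact hQ1ω j (Finset.mem_range.2 hjL)
      have hth := Finset.sum_le_card_nsmul _ _ 1 hb
      rw [Nat.card_Ico] at hth
      have hcard : L - (cc + 1) = m - 1 := by omega
      rw [hcard] at hth
      have hcast : ((m - 1 : ℕ) : ℝ) = (m : ℝ) - 1 := by
        have h1m : (1 : ℕ) ≤ m := hm
        push_cast [Nat.cast_sub h1m]
        ring
      calc ∑ j ∈ Finset.Ico (cc + 1) L, q n (n + j) ω ≤ (m - 1 : ℕ) • (1 : ℝ) := hth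
        _ = (m : ℝ) - 1 := by rw [nsmul_eq_mul, hcast]; ring
    -- abstract arithmetic
    have harith : ∀ Ef D S1 S2 : ℝ, Ef ≤ (c3 + c4) * (S1 + S2) - c4 * L →
        S2 ≤ (m : ℝ) - 1 → (c3 + c4) * S1 ≤ κ * D → Ef + β - κ * D ≤ 0 := by
      intro Ef D S1 S2 ha hb hc
      have hβval : β = c4 * L - (c3 + c4) * m := hβ_def
      nlinarith [mul_le_mul_of_nonneg_left hb hc34.le]
    exact harith _ _ _ _ hEfb htail hκD

  -- pathwise facts
  have hpath : ∀ᵐ ω ∂μ, (∀ n, |X (n + 1) ω - X n ω| ≤ 1) ∧ (∀ n, -c2 < f n ω) :=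
    (ae_all_iff.2 h1).and (ae_all_iff.2 h4)
  have hXgrow : ∀ ω, (∀ n, |X (n + 1) ω - X n ω| ≤ 1) → ∀ a k : ℕ, X (a + k) ω ≤ X a ω + k := by
    intro ω hω a k
    induction k with
    | zero => simp
    | succ k ih =>
      have hstep := (abs_le.1 (hω (a + k))).2
      have he : a + (k + 1) = a + k + 1 := by omega
      rw [he]
      push_cast
      push_cast at ih
      linarith
  -- the processes
  set Z : ℕ → Ω → ℝ := fun t ω => f (t * L) ω + β * t - κ * X (t * L) ω with hZ_def
  have hZint : ∀ t, Integrable (Z t) μ := by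
    intro t
    exact ((hfint _).add (integrable_const _)).sub ((hXint _).const_mul κ)
  have hZdrift : ∀ t, μ[(fun ω => Z (t + 1) ω - Z t ω) | ℱ (t * L)] ≤ᵐ[μ] fun _ => (0 : ℝ) := by
    intro t
    have he : (fun ω => Z (t + 1) ω - Z t ω)
        = fun ω => (f (t * L + L) ω - f (t * L) ω) + β
          - κ * (X (t * L + L) ω - X (t * L) ω) := by
      funext ω
      simp only [hZ_def]
      have h' : (t + 1) * L = t * L + L := by ring
      rw [h']
      push_cast
      ring
    rw [he]
    exact hcore (t * L)
  have hZdiffint : ∀ t, Integrable (fun ω => Z (t + 1) ω - Z t ω) μ := by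
    intro t
    exact (hZint _).sub (hZint _)
  -- the key null-set estimate
  have hnull : ∀ t0 : ℕ,
      μ {ω | ∀ t, t0 ≤ t → X (t * L) ω ≤ ε * ((t * L : ℕ) : ℝ)} = 0 := by
    intro t0
    set B : Set Ω := {ω | ∀ t, t0 ≤ t → X (t * L) ω ≤ ε * ((t * L : ℕ) : ℝ)} with hB_def
    set S : ℕ → Set Ω :=
      fun t => {ω | ∀ s, t0 ≤ s → s ≤ t → X (s * L) ω ≤ ε * ((s * L : ℕ) : ℝ)} with hS_def
    have hBS : ∀ t, B ⊆ S t := fun t ω hω s hs1 _ => hω s hs1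
    have hSmeas : ∀ t, MeasurableSet[ℱ (t * L)] (S t) := by
      intro t
      have hrw : S t = ⋂ s ∈ Set.Icc t0 t, {ω | X (s * L) ω ≤ ε * ((s * L : ℕ) : ℝ)} := by
        ext ω
        simp only [hS_def, Set.mem_setOf_eq, Set.mem_iInter, Set.mem_Icc, and_imp]
      rw [hrw]
      refine MeasurableSet.biInter (Set.to_countable _) fun s hs => ?_
      have hmle : ℱ (s * L) ≤ ℱ (t * L) := ℱ.mono (Nat.mul_le_mul_right L hs.2)
      exact measurableSet_le (((hXadp (s * L)).mono hmle).measurable) measurable_const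
    have hSmeas0 : ∀ t, MeasurableSet (S t) := fun t => ℱ.le _ _ (hSmeas t)
    have hSsub : ∀ t, S (t + 1) ⊆ S t :=
      fun t ω hω s hs1 hs2 => hω s hs1 (hs2.trans (Nat.le_succ t))
    have hεt : ∀ t : ℕ, κ * (ε * ((t : ℝ) * (L : ℝ))) = β * t / 2 := by
      intro t
      linear_combination (t : ℝ) * hεκL
    -- one-step decrease of the stopped integral
    have hkey : ∀ t, t0 ≤ t →
        ∫ ω in S (t + 1), (Z (t + 1) ω + (c2 + κ * L)) ∂μ
          ≤ ∫ ω in S t, (Z t ω + (c2 + κ * L)) ∂μ := by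
      intro t ht
      have hint1 : IntegrableOn (fun ω => Z (t + 1) ω + (c2 + κ * L)) (S t) μ :=
        ((hZint (t + 1)).add (integrable_const _)).integrableOn
      have hint0 : IntegrableOn (fun ω => Z t ω + (c2 + κ * L)) (S t) μ :=
        ((hZint t).add (integrable_const _)).integrableOn
      have hintd : IntegrableOn (fun ω => Z (t + 1) ω - Z t ω) (S t) μ :=
        (hZdiffint t).integrableOn
      have hnn : ∀ᵐ ω ∂(μ.restrict (S t)), 0 ≤ Z (t + 1) ω + (c2 + κ * L) := by
        rw [ae_restrict_iff' (hSmeas0 t)]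
        filter_upwards [hpath] with ω hω hmem
        obtain ⟨hΔ, hf⟩ := hω
        have hXt : X (t * L) ω ≤ ε * ((t * L : ℕ) : ℝ) := hmem t ht le_rfl
        have hXt1 : X ((t + 1) * L) ω ≤ X (t * L) ω + L := by
          have hg := hXgrow ω hΔ (t * L) L
          have he : t * L + L = (t + 1) * L := by ring
          rwa [he] at hg
        have hfb : -c2 < f ((t + 1) * L) ω := hf _
        simp only [hZ_def]
        push_cast at hXt ⊢
        nlinarith [hεt t, mul_le_mul_of_nonneg_left hXt hκpos.le,
          mul_le_mul_of_nonneg_left hXt1 hκpos.le, hβpos.le, hκpos.le,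
          (Nat.cast_nonneg t : (0 : ℝ) ≤ t)]
      have hmono1 : ∫ ω in S (t + 1), (Z (t + 1) ω + (c2 + κ * L)) ∂μ
          ≤ ∫ ω in S t, (Z (t + 1) ω + (c2 + κ * L)) ∂μ :=
        setIntegral_mono_set hint1 (hnn.mono fun ω h => h) (HasSubset.Subset.eventuallyLE (hSsub t))
      have heq2 : (fun ω => Z (t + 1) ω + (c2 + κ * L))
          = fun ω => (Z t ω + (c2 + κ * L)) + (Z (t + 1) ω - Z t ω) := by
        funext ω; ring
      have hsplit : ∫ ω in S t, (Z (t + 1) ω + (c2 + κ * L)) ∂μ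
          = ∫ ω in S t, (Z t ω + (c2 + κ * L)) ∂μ
            + ∫ ω in S t, (Z (t + 1) ω - Z t ω) ∂μ := by
        rw [heq2]
        exact integral_add hint0 hintd
      have hdriftint : ∫ ω in S t, (Z (t + 1) ω - Z t ω) ∂μ ≤ 0 := by
        have heqc := setIntegral_condExp (ℱ.le (t * L)) (hZdiffint t) (hSmeas t)
        rw [← heqc]
        refine integral_nonpos_of_ae ?_
        refine ae_restrict_of_ae ?_
        filter_upwards [hZdrift t] with ω hω
        exact hω
      calc ∫ ω in S (t + 1), (Z (t + 1) ω + (c2 + κ * L)) ∂μ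
          ≤ ∫ ω in S t, (Z (t + 1) ω + (c2 + κ * L)) ∂μ := hmono1
        _ = ∫ ω in S t, (Z t ω + (c2 + κ * L)) ∂μ
            + ∫ ω in S t, (Z (t + 1) ω - Z t ω) ∂μ := hsplit
        _ ≤ ∫ ω in S t, (Z t ω + (c2 + κ * L)) ∂μ := by linarith
    have hJle : ∀ t, t0 ≤ t →
        ∫ ω in S t, (Z t ω + (c2 + κ * L)) ∂μ
          ≤ ∫ ω in S t0, (Z t0 ω + (c2 + κ * L)) ∂μ := by
      intro t ht
      induction t, ht using Nat.le_induction with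
      | base => exact le_rfl
      | succ t ht ih => exact (hkey t ht).trans ih
    have hJlb : ∀ t, t0 ≤ t →
        (β * t / 2) * (μ B).toReal ≤ ∫ ω in S t, (Z t ω + (c2 + κ * L)) ∂μ := by
      intro t ht
      have hc : ∀ᵐ ω ∂(μ.restrict (S t)), β * t / 2 ≤ Z t ω + (c2 + κ * L) := by
        rw [ae_restrict_iff' (hSmeas0 t)]
        filter_upwards [hpath] with ω hω hmem
        have hXt : X (t * L) ω ≤ ε * ((t * L : ℕ) : ℝ) := hmem t ht le_rfl
        have hfb : -c2 < f (t * L) ω := hω.2 _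
        simp only [hZ_def]
        push_cast at hXt ⊢
        nlinarith [hεt t, mul_le_mul_of_nonneg_left hXt hκpos.le, hκpos.le,
          (Nat.cast_nonneg L : (0 : ℝ) ≤ L)]
      have hβt : (0 : ℝ) ≤ β * t / 2 :=
        div_nonneg (mul_nonneg hβpos.le (Nat.cast_nonneg t)) (by norm_num)
      calc (β * t / 2) * (μ B).toReal
          ≤ (β * t / 2) * (μ (S t)).toReal := by
            refine mul_le_mul_of_nonneg_left ?_ hβt
            exact ENNReal.toReal_mono (measure_ne_top μ _) (measure_mono (hBS t))
        _ = ∫ _ω in S t, (β * t / 2) ∂μ := by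
            rw [setIntegral_const, smul_eq_mul, mul_comm]; rfl
        _ ≤ ∫ ω in S t, (Z t ω + (c2 + κ * L)) ∂μ := by
            refine integral_mono_ae ?_ ?_ hc
            · exact integrableOn_const
            · exact ((hZint t).add (integrable_const _)).integrableOn
    by_contra hBne
    have hrpos : 0 < (μ B).toReal :=
      ENNReal.toReal_pos hBne (measure_ne_top μ _)
    set J0 := ∫ ω in S t0, (Z t0 ω + (c2 + κ * L)) ∂μ with hJ0_def
    obtain ⟨t, htgt⟩ := exists_nat_gt (max (t0 : ℝ) (J0 * 2 / (β * (μ B).toReal)))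
    have ht0 : t0 ≤ t := by
      have := lt_of_le_of_lt (le_max_left (t0 : ℝ) _) htgt
      exact_mod_cast this.le
    have hub := (hJlb t ht0).trans (hJle t ht0)
    have hlb : J0 * 2 / (β * (μ B).toReal) < t :=
      lt_of_le_of_lt (le_max_right _ _) htgt
    rw [div_lt_iff₀ (mul_pos hβpos hrpos)] at hlb
    have h2a : ((β * (t : ℝ) / 2) * (μ B).toReal) * 2 ≤ J0 * 2 := by linarith
    have hring : ((β * (t : ℝ) / 2) * (μ B).toReal) * 2
        = (t : ℝ) * (β * (μ B).toReal) := by ring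
    rw [hring] at h2a
    exact absurd hlb (not_lt.2 h2a)
  -- almost surely the scaled process exceeds ε t L infinitely often
  have haeB : ∀ᵐ ω ∂μ, ∀ t0 : ℕ,
      ¬(∀ t, t0 ≤ t → X (t * L) ω ≤ ε * ((t * L : ℕ) : ℝ)) := by
    rw [ae_all_iff]
    intro t0
    have h := (measure_eq_zero_iff_ae_notMem).1 (hnull t0)
    filter_upwards [h] with ω hω
    simpa using hω
  refine ⟨ε / 2, half_pos hεpos, ?_⟩
  filter_upwards [hpath, haeB] with ω hω hesc
  have hbdd : IsBoundedUnder (· ≤ ·) atTop (fun n : ℕ => X n ω / n) := by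
    refine isBoundedUnder_of ⟨|X 0 ω| + 1, fun n => ?_⟩
    rcases Nat.eq_zero_or_pos n with hn | hn
    · subst hn
      simp only [Nat.cast_zero, div_zero]
      positivity
    · have hXn : X n ω ≤ X 0 ω + n := by simpa using hXgrow ω hω.1 0 n
      rw [div_le_iff₀ (by exact_mod_cast hn : (0 : ℝ) < (n : ℝ))]
      have h1n : (1 : ℝ) ≤ (n : ℝ) := by exact_mod_cast hn
      nlinarith [abs_nonneg (X 0 ω), le_abs_self (X 0 ω)]
  have hfreq : ∃ᶠ n in atTop, ε ≤ X n ω / n := by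
    rw [Filter.frequently_atTop]
    intro a
    have h := hesc (a + 1)
    push_neg at h
    obtain ⟨t, ht, hXt⟩ := h
    refine ⟨t * L, ?_, ?_⟩
    · calc a ≤ a + 1 := Nat.le_succ a
        _ ≤ t := ht
        _ ≤ t * L := Nat.le_mul_of_pos_right t hLpos
    · have htL : 0 < t * L := Nat.mul_pos (Nat.lt_of_lt_of_le (Nat.succ_pos a) ht) hLpos
      rw [le_div_iff₀ (by exact_mod_cast htL : (0 : ℝ) < ((t * L : ℕ) : ℝ))]
      exact hXt.le
  have hlim := le_limsup_of_frequently_le hfreq hbdd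
  calc ε / 2 < ε := by linarith
    _ ≤ _ := hlim
end

section
/- Under hypotheses (i)–(iii), for each integer k with 0 ≤ k < m, the process (c1·G_{n,k} − X_{mn+k})_{n≥0} is a supermartingale with respect to the filtration (F_{mn+k})_{n≥0}. -/
open MeasureTheory Filter

lemma condexp_diff_nonneg' {Ω : Type*} {m0 : MeasurableSpace Ω} {μ : Measure Ω}
    [IsProbabilityMeasure μ] (ℱ : Filtration ℕ m0)
    (X : ℕ → Ω → ℝ)
    (hXint : ∀ n, Integrable (X n) μ)
    (h2 : ∀ n, 0 ≤ᵐ[μ] μ[fun ω => X (n + 1) ω - X n ω | ℱ n])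
    (j n : ℕ) :
    0 ≤ᵐ[μ] μ[fun ω => X (n + j) ω - X n ω | ℱ n] := by
  induction j with
  | zero =>
      have h : (fun ω => X (n + 0) ω - X n ω) = (0 : Ω → ℝ) := by
        funext ω; simp
      rw [h, condExp_zero]
  | succ j ih =>
      have heq : (fun ω => X (n + (j + 1)) ω - X n ω)
          = (fun ω => X ((n + j) + 1) ω - X (n + j) ω) + fun ω => X (n + j) ω - X n ω := by
        funext ω
        show X (n + (j+1)) ω - X n ω = _
        rw [show n + (j+1) = n + j + 1 from by ring]
        simp only [Pi.add_apply]; ring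
      have hint1 : Integrable (fun ω => X ((n + j) + 1) ω - X (n + j) ω) μ :=
        (hXint _).sub (hXint _)
      have hint2 : Integrable (fun ω => X (n + j) ω - X n ω) μ :=
        (hXint _).sub (hXint _)
      have hadd := condExp_add (m := ℱ n) (μ := μ) hint1 hint2
      have htower := condExp_condExp_of_le (μ := μ)
        (f := fun ω => X ((n + j) + 1) ω - X (n + j) ω)
        (ℱ.mono (Nat.le_add_right n j)) (ℱ.le (n + j))
      have hnn : 0 ≤ᵐ[μ] μ[μ[fun ω => X ((n + j) + 1) ω - X (n + j) ω | ℱ (n + j)] | ℱ n] :=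
        condExp_nonneg (h2 (n + j))
      have h1 : 0 ≤ᵐ[μ] μ[fun ω => X ((n + j) + 1) ω - X (n + j) ω | ℱ n] := by
        filter_upwards [hnn, htower] with ω hω heqω
        rw [← heqω]; exact hω
      rw [heq]
      filter_upwards [hadd, h1, ih] with ω ha hb hc
      rw [ha]
      simpa using add_nonneg hb hc

/-- The sub-filtration `n ↦ ℱ (m * n + k)`. -/
def skipFiltration {Ω : Type*} {m0 : MeasurableSpace Ω}
    (ℱ : MeasureTheory.Filtration ℕ m0) (m k : ℕ) :
    MeasureTheory.Filtration ℕ m0 where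
  seq n := ℱ (m * n + k)
  mono' := fun _ _ hij => ℱ.mono (Nat.add_le_add_right (Nat.mul_le_mul_left m hij) k)
  le' _ := ℱ.le _

/-- Under hypotheses (i)–(iii), for each `0 ≤ k < m` the process
`c1 * G_{n,k} - X_{m n + k}` is a supermartingale with respect to the
filtration `(F_{m n + k})ₙ`, where `G_{n,k} = ∑_{i<n} 1_{A_{m i + k}}`. -/
theorem supermartingale_skip {Ω : Type*} {m0 : MeasurableSpace Ω} {μ : Measure Ω}
    [IsProbabilityMeasure μ] (ℱ : Filtration ℕ m0)
    (hF0 : ∀ s : Set Ω, MeasurableSet[ℱ 0] s → μ s = 0 ∨ μ s = 1)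
    (X : ℕ → Ω → ℝ) (A : ℕ → Set Ω)
    (hXadp : ∀ n, StronglyMeasurable[ℱ n] (X n))
    (hAmeas : ∀ n, MeasurableSet[ℱ n] (A n))
    (hXint : ∀ n, Integrable (X n) μ)
    (c1 : ℝ) (hc1 : 0 < c1) (m : ℕ) (hm : 0 < m)
    (h1 : ∀ n, ∀ᵐ ω ∂μ, |X (n + 1) ω - X n ω| ≤ 1)
    (h2 : ∀ n, 0 ≤ᵐ[μ] μ[fun ω => X (n + 1) ω - X n ω | ℱ n])
    (h3 : ∀ n, ∀ᵐ ω ∂μ, ω ∈ A n →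
      c1 < (μ[fun ω => X (n + m) ω - X n ω | ℱ n]) ω)
    (k : ℕ) (hk : k < m) :
    Supermartingale
      (fun n ω =>
        c1 * (∑ i ∈ Finset.range n, (A (m * i + k)).indicator (fun _ => (1 : ℝ)) ω)
          - X (m * n + k) ω)
      (skipFiltration ℱ m k) μ := by
  set f : ℕ → Ω → ℝ := fun n ω =>
    c1 * (∑ i ∈ Finset.range n, (A (m * i + k)).indicator (fun _ => (1 : ℝ)) ω)
      - X (m * n + k) ω with hf
  -- adaptedness
  have hGmeas : ∀ n, StronglyMeasurable[ℱ (m * n + k)]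
      (fun ω => ∑ i ∈ Finset.range n, (A (m * i + k)).indicator (fun _ => (1 : ℝ)) ω) := by
    intro n
    apply Finset.stronglyMeasurable_fun_sum
    intro i hi
    have hle : ℱ (m * i + k) ≤ ℱ (m * n + k) :=
      ℱ.mono (Nat.add_le_add_right (Nat.mul_le_mul_left m (Finset.mem_range.mp hi).le) k)
    exact (stronglyMeasurable_const.indicator (hAmeas (m * i + k))).mono hle
  have hadp : StronglyAdapted (skipFiltration ℱ m k) f := by
    intro n
    exact ((hGmeas n).const_mul c1).sub (hXadp (m * n + k))
  -- integrability
  have hGint : ∀ n, Integrable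
      (fun ω => ∑ i ∈ Finset.range n, (A (m * i + k)).indicator (fun _ => (1 : ℝ)) ω) μ := by
    intro n
    apply integrable_finset_sum
    intro i _
    exact (integrable_const (1 : ℝ)).indicator (ℱ.le _ _ (hAmeas (m * i + k)))
  have hint : ∀ n, Integrable (f n) μ := fun n =>
    ((hGint n).const_mul c1).sub (hXint (m * n + k))
  refine supermartingale_nat hadp hint ?_
  intro n
  set N := m * n + k with hN
  have hNm : m * (n + 1) + k = N + m := by rw [hN]; ring
  -- the increment
  set D : Ω → ℝ := fun ω => X (N + m) ω - X N ω with hD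
  have hDint : Integrable D μ := (hXint _).sub (hXint _)
  set h : Ω → ℝ := fun ω => c1 * (A N).indicator (fun _ => (1 : ℝ)) ω with hh
  have hfsucc : f (n + 1) = f n + (h - D) := by
    funext ω
    simp only [hf, hh, hD, Pi.add_apply, Pi.sub_apply, Finset.sum_range_succ, hNm, ← hN]
    ring
  have hhmeas : StronglyMeasurable[ℱ N] h :=
    (stronglyMeasurable_const.indicator (hAmeas N)).const_mul c1
  have hhint : Integrable h μ :=
    ((integrable_const (1 : ℝ)).indicator (ℱ.le _ _ (hAmeas N))).const_mul c1
  have hG : (skipFiltration ℱ m k) n = ℱ N := rfl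
  -- condexp computation
  have hce : μ[f (n + 1) | ℱ N] =ᵐ[μ] f n + (h - μ[D | ℱ N]) := by
    rw [hfsucc]
    refine (condExp_add (hint n) (hhint.sub hDint) _).trans ?_
    have e1 : μ[f n | ℱ N] =ᵐ[μ] f n :=
      (condExp_of_stronglyMeasurable (ℱ.le N) (hadp n) (hint n)).symm ▸
        Filter.EventuallyEq.rfl
    have e2 : μ[h - D | ℱ N] =ᵐ[μ] h - μ[D | ℱ N] := by
      refine (condExp_sub hhint hDint _).trans ?_
      have : μ[h | ℱ N] =ᵐ[μ] h :=
        (condExp_of_stronglyMeasurable (ℱ.le N) hhmeas hhint).symm ▸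
          Filter.EventuallyEq.rfl
      filter_upwards [this] with ω hω
      simp [Pi.sub_apply, hω]
    filter_upwards [e1, e2] with ω h1' h2'
    simp [Pi.add_apply, h1', h2']
  -- key inequality: h ≤ μ[D | ℱ N] a.e.
  have hkey : h ≤ᵐ[μ] μ[D | ℱ N] := by
    have hpos := condexp_diff_nonneg' ℱ X hXint h2 m N
    filter_upwards [h3 N, hpos] with ω h3ω hposω
    by_cases hA : ω ∈ A N
    · have : h ω = c1 := by simp [hh, Set.indicator_of_mem hA]
      rw [this]
      exact (h3ω hA).le
    · have : h ω = 0 := by simp [hh, Set.indicator_of_notMem hA]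
      rw [this]
      exact hposω
  -- conclude
  rw [hG]
  filter_upwards [hce, hkey] with ω hceω hkeyω
  rw [hceω]
  simp only [Pi.add_apply, Pi.sub_apply]
  linarith
end

section
/- Under hypotheses (iv)–(vi), there exists a constant c ≥ 0 such that for all n ≥ 0, E[G_n] ≥ (c4/(c3 + c4))·n − c. -/
open MeasureTheory Filter

/-- Under hypotheses (iv)–(vi), there is a constant `c ≥ 0` such that
`E[Gₙ] ≥ (c4/(c3+c4)) * n - c` for all `n`, where `Gₙ = ∑_{i<n} 1_{A_i}`. -/
theorem expected_G_lower_bound {Ω : Type*} {m0 : MeasurableSpace Ω} {μ : Measure Ω}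
    [IsProbabilityMeasure μ] (ℱ : Filtration ℕ m0)
    (hF0 : ∀ s : Set Ω, MeasurableSet[ℱ 0] s → μ s = 0 ∨ μ s = 1)
    (f : ℕ → Ω → ℝ) (A : ℕ → Set Ω)
    (hfadp : ∀ n, StronglyMeasurable[ℱ n] (f n))
    (hAmeas : ∀ n, MeasurableSet[ℱ n] (A n))
    (hfint : ∀ n, Integrable (f n) μ)
    (c2 c3 c4 : ℝ) (hc2 : 0 < c2) (hc3 : 0 < c3) (hc4 : 0 < c4)
    (h4 : ∀ n, ∀ᵐ ω ∂μ, -c2 < f n ω)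
    (h5 : ∀ n, ∀ᵐ ω ∂μ,
      (f (n + 1) ω - f n ω) * (A n).indicator (fun _ => (1 : ℝ)) ω < c3)
    (h6 : ∀ n, ∀ᵐ ω ∂μ, ω ∉ A n →
      (μ[fun ω => f (n + 1) ω - f n ω | ℱ n]) ω < -c4) :
    ∃ c : ℝ, 0 ≤ c ∧ ∀ n : ℕ,
      c4 / (c3 + c4) * (n : ℝ) - c ≤
        ∫ ω, (∑ i ∈ Finset.range n, (A i).indicator (fun _ => (1 : ℝ)) ω) ∂μ := by
  have hsum : 0 < c3 + c4 := by linarith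
  set g : ℕ → ℝ := fun i => ∫ ω, (A i).indicator (fun _ => (1 : ℝ)) ω ∂μ with hg
  have hAm0 : ∀ i, MeasurableSet (A i) := fun i => (ℱ.le i) _ (hAmeas i)
  have hgval : ∀ i, g i = (μ (A i)).toReal := by
    intro i
    simp [hg, integral_indicator_const, (hAm0 i)]
    rfl
  -- lower bound on integrals of f
  have hIlb : ∀ n, -c2 ≤ ∫ ω, f n ω ∂μ := by
    intro n
    have : ∫ ω, (-c2 : ℝ) ∂μ ≤ ∫ ω, f n ω ∂μ := by
      refine integral_mono_ae (integrable_const _) (hfint n) ?_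
      filter_upwards [h4 n] with ω hω using hω.le
    simpa using this
  -- key step inequality
  have key : ∀ n, ∫ ω, f (n+1) ω ∂μ - ∫ ω, f n ω ∂μ ≤ (c3 + c4) * g n - c4 := by
    intro n
    have hdint : Integrable (fun ω => f (n+1) ω - f n ω) μ := (hfint (n+1)).sub (hfint n)
    have hsplit : ∫ ω, (f (n+1) ω - f n ω) ∂μ
        = (∫ ω in A n, (f (n+1) ω - f n ω) ∂μ) + ∫ ω in (A n)ᶜ, (f (n+1) ω - f n ω) ∂μ :=
      (integral_add_compl (hAm0 n) hdint).symm
    have h1 : ∫ ω in A n, (f (n+1) ω - f n ω) ∂μ ≤ c3 * (μ (A n)).toReal := by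
      have := setIntegral_mono_on_ae (f := fun ω => f (n+1) ω - f n ω)
        (g := fun _ => c3) hdint.integrableOn (integrableOn_const (measure_ne_top μ _))
        (hAm0 n) ?_
      · simpa [smul_eq_mul, mul_comm, measureReal_def] using this
      · filter_upwards [h5 n] with ω hω hmem
        rw [Set.indicator_of_mem hmem, mul_one] at hω
        exact hω.le
    have h2 : ∫ ω in (A n)ᶜ, (f (n+1) ω - f n ω) ∂μ ≤ -c4 * (μ (A n)ᶜ).toReal := by
      have hce : ∫ ω in (A n)ᶜ, (μ[fun ω => f (n + 1) ω - f n ω | ℱ n]) ω ∂μ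
          = ∫ ω in (A n)ᶜ, (f (n+1) ω - f n ω) ∂μ :=
        setIntegral_condExp (ℱ.le n) hdint (hAmeas n).compl
      rw [← hce]
      have := setIntegral_mono_on_ae (μ := μ) (f := fun ω => (μ[fun ω => f (n + 1) ω - f n ω | ℱ n]) ω)
        (g := fun _ => -c4) integrable_condExp.integrableOn
        (integrableOn_const (measure_ne_top μ _)) (hAm0 n).compl ?_
      · simpa [smul_eq_mul, mul_comm, measureReal_def] using this
      · filter_upwards [h6 n] with ω hω hmem
        exact (hω hmem).le
    have hcompl : (μ (A n)ᶜ).toReal = 1 - (μ (A n)).toReal := by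
      rw [measure_compl (hAm0 n) (measure_ne_top μ _), measure_univ,
        ENNReal.toReal_sub_of_le prob_le_one ENNReal.one_ne_top, ENNReal.toReal_one]
    have hdInt : ∫ ω, (f (n+1) ω - f n ω) ∂μ = ∫ ω, f (n+1) ω ∂μ - ∫ ω, f n ω ∂μ :=
      integral_sub (hfint (n+1)) (hfint n)
    rw [hgval n]
    nlinarith [h1, h2, hcompl, hsplit, hdInt]
  -- telescoping
  have htel : ∀ n : ℕ, ∫ ω, f n ω ∂μ - ∫ ω, f 0 ω ∂μ
      ≤ (c3 + c4) * (∑ i ∈ Finset.range n, g i) - c4 * n := by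
    intro n
    induction n with
    | zero => simp
    | succ n ih =>
      have := key n
      rw [Finset.sum_range_succ]
      push_cast
      linarith
  refine ⟨(c2 + ∫ ω, f 0 ω ∂μ) / (c3 + c4), ?_, ?_⟩
  · apply div_nonneg _ hsum.le
    linarith [hIlb 0]
  · intro n
    have hEG : ∫ ω, (∑ i ∈ Finset.range n, (A i).indicator (fun _ => (1 : ℝ)) ω) ∂μ
        = ∑ i ∈ Finset.range n, g i := by
      rw [integral_finset_sum]
      intro i _
      exact (integrable_const (1 : ℝ)).indicator (hAm0 i)
    rw [hEG]
    have h1 := htel n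
    have h2 := hIlb n
    rw [div_mul_eq_mul_div, div_sub_div_same, div_le_iff₀ hsum]
    ring_nf
    nlinarith [h1, h2]
end

section
/- Under hypotheses (i)–(iii), for each integer k with 0 ≤ k < m there exists a constant c ≥ 0 such that for all n ≥ 0, E[X_{mn+k}] ≥ c1·E[G_{n,k}] − c. -/
open MeasureTheory Filter

/-- Under hypotheses (i)–(iii), for each `0 ≤ k < m` there is a constant `c ≥ 0`
such that `E[X_{m n + k}] ≥ c1 * E[G_{n,k}] - c` for all `n`, where
`G_{n,k} = ∑_{i<n} 1_{A_{m i + k}}`. -/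
theorem expected_X_lower_bound {Ω : Type*} {m0 : MeasurableSpace Ω} {μ : Measure Ω}
    [IsProbabilityMeasure μ] (ℱ : Filtration ℕ m0)
    (hF0 : ∀ s : Set Ω, MeasurableSet[ℱ 0] s → μ s = 0 ∨ μ s = 1)
    (X : ℕ → Ω → ℝ) (A : ℕ → Set Ω)
    (hXadp : ∀ n, StronglyMeasurable[ℱ n] (X n))
    (hAmeas : ∀ n, MeasurableSet[ℱ n] (A n))
    (hXint : ∀ n, Integrable (X n) μ)
    (c1 : ℝ) (hc1 : 0 < c1) (m : ℕ) (hm : 0 < m)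
    (h1 : ∀ n, ∀ᵐ ω ∂μ, |X (n + 1) ω - X n ω| ≤ 1)
    (h2 : ∀ n, 0 ≤ᵐ[μ] μ[fun ω => X (n + 1) ω - X n ω | ℱ n])
    (h3 : ∀ n, ∀ᵐ ω ∂μ, ω ∈ A n →
      c1 < (μ[fun ω => X (n + m) ω - X n ω | ℱ n]) ω)
    (k : ℕ) (hk : k < m) :
    ∃ c : ℝ, 0 ≤ c ∧ ∀ n : ℕ,
      c1 * (∫ ω, (∑ i ∈ Finset.range n,
          (A (m * i + k)).indicator (fun _ => (1 : ℝ)) ω) ∂μ) - c ≤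
        ∫ ω, X (m * n + k) ω ∂μ := by
  -- conditional expectations of differences are nonnegative
  have hnonneg : ∀ n j, 0 ≤ᵐ[μ] μ[fun ω => X (n + j) ω - X n ω | ℱ n] := by
    intro n j
    induction j with
    | zero =>
        simp only [Nat.add_zero, sub_self]
        have h0 : μ[(fun _ : Ω => (0 : ℝ)) | ℱ n] = 0 := condExp_zero
        rw [h0]
    | succ j ih =>
        have hsplit : (fun ω => X (n + (j + 1)) ω - X n ω)
            = (fun ω => X (n + j + 1) ω - X (n + j) ω) + fun ω => X (n + j) ω - X n ω := by
          funext ω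
          simp only [Pi.add_apply]
          rw [show n + (j + 1) = n + j + 1 by ring]
          ring
        rw [hsplit]
        have hadd := condExp_add (μ := μ) (m := ℱ n)
          (f := fun ω => X (n + j + 1) ω - X (n + j) ω)
          (g := fun ω => X (n + j) ω - X n ω)
          ((hXint (n + j + 1)).sub (hXint (n + j))) ((hXint (n + j)).sub (hXint n))
        refine EventuallyLE.trans ?_ hadd.symm.le
        have h1' : 0 ≤ᵐ[μ] μ[fun ω => X (n + j + 1) ω - X (n + j) ω | ℱ n] := by
          have htower := condExp_condExp_of_le (μ := μ)
            (f := fun ω => X (n + j + 1) ω - X (n + j) ω)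
            (ℱ.mono (Nat.le_add_right n j)) (ℱ.le (n + j))
          exact (condExp_nonneg (h2 (n + j))).trans htower.le
        filter_upwards [h1', ih] with ω h1ω h2ω
        simp only [Pi.add_apply, Pi.zero_apply] at *
        linarith
  -- one-block bound
  have key : ∀ n, c1 * (μ (A n)).toReal + ∫ ω, X n ω ∂μ ≤ ∫ ω, X (n + m) ω ∂μ := by
    intro n
    have hInt : Integrable (fun ω => X (n + m) ω - X n ω) μ := (hXint _).sub (hXint _)
    have hae : ∀ᵐ ω ∂μ, (A n).indicator (fun _ => c1) ω
        ≤ (μ[fun ω => X (n + m) ω - X n ω | ℱ n]) ω := by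
      filter_upwards [h3 n, hnonneg n m] with ω h3ω hnω
      by_cases hω : ω ∈ A n
      · simp only [Set.indicator_of_mem hω]
        exact (h3ω hω).le
      · simp only [Set.indicator_of_notMem hω]
        exact hnω
    have hmeasA : MeasurableSet (A n) := (ℱ.le n) _ (hAmeas n)
    have hIndInt : Integrable ((A n).indicator (fun _ => c1)) μ :=
      (integrable_const c1).indicator hmeasA
    have hmono : ∫ ω, (A n).indicator (fun _ => c1) ω ∂μ
        ≤ ∫ ω, (μ[fun ω => X (n + m) ω - X n ω | ℱ n]) ω ∂μ :=
      integral_mono_ae hIndInt integrable_condExp hae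
    rw [integral_indicator_const _ hmeasA, measureReal_def, integral_condExp (ℱ.le n),
      integral_sub (hXint (n + m)) (hXint n), smul_eq_mul, mul_comm] at hmono
    linarith
  -- integral of the sum of indicators
  have hGsum : ∀ n, (∫ ω, (∑ i ∈ Finset.range n,
      (A (m * i + k)).indicator (fun _ => (1 : ℝ)) ω) ∂μ)
      = ∑ i ∈ Finset.range n, (μ (A (m * i + k))).toReal := by
    intro n
    rw [integral_finset_sum]
    · refine Finset.sum_congr rfl fun i _ => ?_
      rw [integral_indicator_const _ ((ℱ.le _) _ (hAmeas _))]
      simp [measureReal_def]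
    · intro i _
      exact (integrable_const (1 : ℝ)).indicator ((ℱ.le _) _ (hAmeas _))
  refine ⟨|∫ ω, X k ω ∂μ|, abs_nonneg _, fun n => ?_⟩
  rw [hGsum]
  have main : ∀ n, (∫ ω, X k ω ∂μ) + c1 * ∑ i ∈ Finset.range n, (μ (A (m * i + k))).toReal
      ≤ ∫ ω, X (m * n + k) ω ∂μ := by
    intro n
    induction n with
    | zero => simp
    | succ n ih =>
        have hstep := key (m * n + k)
        have heq : m * n + k + m = m * (n + 1) + k := by ring
        rw [heq] at hstep
        rw [Finset.sum_range_succ, mul_add]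
        linarith
  have := main n
  have habs : -(∫ ω, X k ω ∂μ) ≤ |∫ ω, X k ω ∂μ| := neg_le_abs _
  linarith
end

section
/- Under hypotheses (i)–(vi), there exist a constant c7 > 0 and an integer N such that for all n ≥ N, E[max{X_{mn}, X_{mn+1}, …, X_{mn+m−1}}] > c7·n. -/
open MeasureTheory Filter

private lemma myIntSup {Ω : Type*} {m0 : MeasurableSpace Ω} {μ : Measure Ω}
    (s : Finset ℕ) (hs : s.Nonempty) (g : ℕ → Ω → ℝ) (hg : ∀ i ∈ s, Integrable (g i) μ) :
    Integrable (fun ω => s.sup' hs (fun i => g i ω)) μ := by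
  induction hs using Finset.Nonempty.cons_induction with
  | singleton i => simpa only [Finset.sup'_singleton] using hg i (by simp)
  | cons i t hit ht ih =>
      simp only [Finset.sup'_cons (H := ht)]
      exact (hg i (by simp)).sup (ih fun j hj => hg j (Finset.mem_cons_of_mem hj))

/-- Under hypotheses (i)–(vi), there exist `c7 > 0` and an integer `N` such that
for all `n ≥ N`, `E[max { X_{m n}, …, X_{m n + m - 1} }] > c7 * n`. -/
theorem expected_max_lower_bound {Ω : Type*} {m0 : MeasurableSpace Ω} {μ : Measure Ω}
    [IsProbabilityMeasure μ] (ℱ : Filtration ℕ m0)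
    (hF0 : ∀ s : Set Ω, MeasurableSet[ℱ 0] s → μ s = 0 ∨ μ s = 1)
    (X f : ℕ → Ω → ℝ) (A : ℕ → Set Ω)
    (hXadp : ∀ n, StronglyMeasurable[ℱ n] (X n))
    (hfadp : ∀ n, StronglyMeasurable[ℱ n] (f n))
    (hAmeas : ∀ n, MeasurableSet[ℱ n] (A n))
    (hXint : ∀ n, Integrable (X n) μ)
    (hfint : ∀ n, Integrable (f n) μ)
    (c1 c2 c3 c4 : ℝ) (hc1 : 0 < c1) (hc2 : 0 < c2) (hc3 : 0 < c3) (hc4 : 0 < c4)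
    (m : ℕ) (hm : 0 < m)
    (h1 : ∀ n, ∀ᵐ ω ∂μ, |X (n + 1) ω - X n ω| ≤ 1)
    (h2 : ∀ n, 0 ≤ᵐ[μ] μ[fun ω => X (n + 1) ω - X n ω | ℱ n])
    (h3 : ∀ n, ∀ᵐ ω ∂μ, ω ∈ A n →
      c1 < (μ[fun ω => X (n + m) ω - X n ω | ℱ n]) ω)
    (h4 : ∀ n, ∀ᵐ ω ∂μ, -c2 < f n ω)
    (h5 : ∀ n, ∀ᵐ ω ∂μ,
      (f (n + 1) ω - f n ω) * (A n).indicator (fun _ => (1 : ℝ)) ω < c3)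
    (h6 : ∀ n, ∀ᵐ ω ∂μ, ω ∉ A n →
      (μ[fun ω => f (n + 1) ω - f n ω | ℱ n]) ω < -c4) :
    ∃ c7 : ℝ, 0 < c7 ∧ ∃ N : ℕ, ∀ n ≥ N,
      c7 * (n : ℝ) <
        ∫ ω, ((Finset.range m).sup' (Finset.nonempty_range_iff.mpr hm.ne')
          fun j => X (m * n + j) ω) ∂μ := by
  classical
  have hAm0 : ∀ n, MeasurableSet (A n) := fun n => (ℱ.le n) _ (hAmeas n)
  set p : ℕ → ℝ := fun n => (μ (A n)).toReal with hp
  set e : ℕ → ℝ := fun n => ∫ ω, X n ω ∂μ with he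
  set S : ℕ → ℝ := fun n => ∑ k ∈ Finset.range n, p k with hSdef
  have hp0 : ∀ n, 0 ≤ p n := fun n => ENNReal.toReal_nonneg
  have hpc : ∀ n, (μ (A n)ᶜ).toReal = 1 - p n := by
    intro n
    have h := measure_add_measure_compl (μ := μ) (hAm0 n)
    have h' : (μ (A n)).toReal + (μ (A n)ᶜ).toReal = 1 := by
      rw [← ENNReal.toReal_add (measure_ne_top μ _) (measure_ne_top μ _), h]
      simp
    simp only [hp]; linarith
  -- Step: for any F_n-measurable set, the increment of X integrates nonnegatively
  have stepX : ∀ n, ∀ s : Set Ω, MeasurableSet[ℱ n] s →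
      0 ≤ ∫ ω in s, (X (n + 1) ω - X n ω) ∂μ := by
    intro n s hs
    have hint : Integrable (fun ω => X (n + 1) ω - X n ω) μ := (hXint (n + 1)).sub (hXint n)
    rw [← setIntegral_condExp (ℱ.le n) hint hs]
    exact integral_nonneg_of_ae (ae_restrict_of_ae (h2 n))
  have stepXk : ∀ n k, ∀ s : Set Ω, MeasurableSet[ℱ n] s →
      0 ≤ ∫ ω in s, (X (n + k) ω - X n ω) ∂μ := by
    intro n k
    induction k with
    | zero => intro s _; simp
    | succ k ih =>
        intro s hs
        have h1' := stepX (n + k) s (ℱ.mono (Nat.le_add_right n k) _ hs)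
        have h2' := ih s hs
        have hi1 : Integrable (fun ω => X (n + k + 1) ω - X (n + k) ω) (μ.restrict s) :=
          ((hXint (n + k + 1)).sub (hXint (n + k))).integrableOn
        have hi2 : Integrable (fun ω => X (n + k) ω - X n ω) (μ.restrict s) :=
          ((hXint (n + k)).sub (hXint n)).integrableOn
        have hadd := integral_add hi1 hi2
        simp only [sub_add_sub_cancel] at hadd
        show (0:ℝ) ≤ ∫ ω in s, (X (n + k + 1) ω - X n ω) ∂μ
        rw [hadd]
        linarith
  -- Step B : e (n+m) ≥ e n + c1 * p n
  have hB : ∀ n, e n + c1 * p n ≤ e (n + m) := by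
    intro n
    have hint : Integrable (fun ω => X (n + m) ω - X n ω) μ := (hXint (n + m)).sub (hXint n)
    have hA' : c1 * p n ≤ ∫ ω in A n, (X (n + m) ω - X n ω) ∂μ := by
      rw [← setIntegral_condExp (ℱ.le n) hint (hAmeas n)]
      have hae : ∀ᵐ ω ∂μ.restrict (A n),
          c1 ≤ (μ[fun ω => X (n + m) ω - X n ω | ℱ n]) ω := by
        rw [ae_restrict_iff' (hAm0 n)]
        filter_upwards [h3 n] with ω h hw using (h hw).le
      calc c1 * p n = ∫ _ω in A n, c1 ∂μ := by
            rw [setIntegral_const]; simp only [smul_eq_mul, hp, measureReal_def]; ring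
        _ ≤ _ := integral_mono_ae (integrable_const _) integrable_condExp.integrableOn hae
    have hAc : 0 ≤ ∫ ω in (A n)ᶜ, (X (n + m) ω - X n ω) ∂μ :=
      stepXk n m (A n)ᶜ (hAmeas n).compl
    have hsplit : (∫ ω in A n, (X (n + m) ω - X n ω) ∂μ)
        + ∫ ω in (A n)ᶜ, (X (n + m) ω - X n ω) ∂μ = e (n + m) - e n := by
      rw [integral_add_compl (hAm0 n) hint, integral_sub (hXint (n + m)) (hXint n)]
    linarith
  -- Step C : expected drift of f
  have hC : ∀ n, ∫ ω, f (n + 1) ω ∂μ ≤ (∫ ω, f n ω ∂μ) + (c3 * p n - c4 * (1 - p n)) := by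
    intro n
    have hint : Integrable (fun ω => f (n + 1) ω - f n ω) μ := (hfint (n + 1)).sub (hfint n)
    have hCA : ∫ ω in A n, (f (n + 1) ω - f n ω) ∂μ ≤ c3 * p n := by
      have hae : ∀ᵐ ω ∂μ.restrict (A n), f (n + 1) ω - f n ω ≤ c3 := by
        rw [ae_restrict_iff' (hAm0 n)]
        filter_upwards [h5 n] with ω h hw
        rw [Set.indicator_of_mem hw, mul_one] at h
        exact h.le
      calc ∫ ω in A n, (f (n + 1) ω - f n ω) ∂μ ≤ ∫ _ω in A n, c3 ∂μ :=
            integral_mono_ae hint.integrableOn (integrable_const _) hae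
        _ = c3 * p n := by rw [setIntegral_const]; simp only [smul_eq_mul, hp, measureReal_def]; ring
    have hCc : ∫ ω in (A n)ᶜ, (f (n + 1) ω - f n ω) ∂μ ≤ -c4 * (1 - p n) := by
      rw [← setIntegral_condExp (ℱ.le n) hint (hAmeas n).compl]
      have hae : ∀ᵐ ω ∂μ.restrict (A n)ᶜ,
          (μ[fun ω => f (n + 1) ω - f n ω | ℱ n]) ω ≤ -c4 := by
        rw [ae_restrict_iff' (hAm0 n).compl]
        filter_upwards [h6 n] with ω h hw using (h hw).le
      calc ∫ ω in (A n)ᶜ, (μ[fun ω => f (n + 1) ω - f n ω | ℱ n]) ω ∂μ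
          ≤ ∫ _ω in (A n)ᶜ, (-c4) ∂μ :=
            integral_mono_ae integrable_condExp.integrableOn (integrable_const _) hae
        _ = -c4 * (1 - p n) := by rw [setIntegral_const, smul_eq_mul, measureReal_def, hpc n]; ring
    have hsplit : (∫ ω in A n, (f (n + 1) ω - f n ω) ∂μ)
        + ∫ ω in (A n)ᶜ, (f (n + 1) ω - f n ω) ∂μ
        = (∫ ω, f (n + 1) ω ∂μ) - ∫ ω, f n ω ∂μ := by
      rw [integral_add_compl (hAm0 n) hint, integral_sub (hfint (n + 1)) (hfint n)]
    linarith
  -- Step D : f bounded below in expectation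
  have hD : ∀ n, -c2 ≤ ∫ ω, f n ω ∂μ := by
    intro n
    calc (-c2 : ℝ) = ∫ _ω, (-c2 : ℝ) ∂μ := by simp
      _ ≤ ∫ ω, f n ω ∂μ :=
        integral_mono_ae (integrable_const _) (hfint n) ((h4 n).mono fun ω h => h.le)
  -- Step E : density of A_n
  have hE : ∀ n, ∫ ω, f n ω ∂μ
      ≤ (∫ ω, f 0 ω ∂μ) + ((c3 + c4) * S n - c4 * n) := by
    intro n
    induction n with
    | zero => simp [hSdef]
    | succ n ih =>
        have := hC n
        have hSn : S (n + 1) = S n + p n := Finset.sum_range_succ _ _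
        rw [hSn]
        push_cast
        push_cast at ih
        linarith
  have hS : ∀ n, c4 * n - (c2 + ∫ ω, f 0 ω ∂μ) ≤ (c3 + c4) * S n := by
    intro n
    have := hE n
    have := hD n
    linarith
  -- Step F : growth of block sums of e
  have hT : ∀ K, (∑ j ∈ Finset.range m, e j) + c1 * S K ≤ ∑ j ∈ Finset.range m, e (K + j) := by
    intro K
    induction K with
    | zero => simp [hSdef]
    | succ K ih =>
        have hkey : ∑ j ∈ Finset.range m, e (K + 1 + j)
            = (∑ j ∈ Finset.range m, e (K + j)) + (e (K + m) - e K) := by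
          have h1' : ∑ j ∈ Finset.range (m + 1), e (K + j)
              = (∑ j ∈ Finset.range m, e (K + (j + 1))) + e (K + 0) :=
            Finset.sum_range_succ' _ m
          have h2' : ∑ j ∈ Finset.range (m + 1), e (K + j)
              = (∑ j ∈ Finset.range m, e (K + j)) + e (K + m) :=
            Finset.sum_range_succ _ m
          have h3' : ∑ j ∈ Finset.range m, e (K + (j + 1))
              = ∑ j ∈ Finset.range m, e (K + 1 + j) :=
            Finset.sum_congr rfl fun j _ => congrArg e (by omega)
          rw [h3'] at h1'
          simp only [Nat.add_zero] at h1'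
          linarith
        have hSn : S (K + 1) = S K + p K := Finset.sum_range_succ _ _
        have := hB K
        rw [hkey, hSn]
        linarith
  -- Final assembly
  set C : ℝ := c2 + ∫ ω, f 0 ω ∂μ with hCdef
  set T0 : ℝ := ∑ j ∈ Finset.range m, e j with hT0def
  set β : ℝ := c3 + c4 with hβdef
  have hβ : 0 < β := by positivity
  have hmpos : (0 : ℝ) < m := by exact_mod_cast hm
  set α : ℝ := c1 * c4 / β with hαdef
  have hα : 0 < α := by positivity
  set D : ℝ := (T0 - c1 * C / β) / m with hDdef
  refine ⟨α / 2, by positivity, Nat.ceil ((2 * (|D| + 1)) / α), fun n hn => ?_⟩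
  -- the integrand bound
  set G : Ω → ℝ := fun ω =>
    (Finset.range m).sup' (Finset.nonempty_range_iff.mpr hm.ne') fun j => X (m * n + j) ω
    with hGdef
  have hGint : Integrable G μ :=
    myIntSup _ _ (fun j => X (m * n + j)) fun j _ => hXint _
  have hGe : ∀ j ∈ Finset.range m, e (m * n + j) ≤ ∫ ω, G ω ∂μ := by
    intro j hj
    refine integral_mono (hXint _) hGint fun ω => ?_
    exact Finset.le_sup' (fun j => X (m * n + j) ω) hj
  have hTG : ∑ j ∈ Finset.range m, e (m * n + j) ≤ (m : ℝ) * ∫ ω, G ω ∂μ := by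
    calc ∑ j ∈ Finset.range m, e (m * n + j) ≤ ∑ _j ∈ Finset.range m, ∫ ω, G ω ∂μ :=
          Finset.sum_le_sum hGe
      _ = (m : ℝ) * ∫ ω, G ω ∂μ := by
          rw [Finset.sum_const, Finset.card_range, nsmul_eq_mul]
  have hSmn : c4 * ((m : ℝ) * n) - C ≤ β * S (m * n) := by
    have := hS (m * n)
    push_cast at this
    linarith
  have hTmn := hT (m * n)
  -- combine: m * I ≥ T0 + c1 * S(mn), β * S(mn) ≥ c4*m*n - C
  have hImn : T0 + c1 * S (m * n) ≤ (m : ℝ) * ∫ ω, G ω ∂μ := le_trans hTmn hTG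
  have hSlb : (c4 * ((m : ℝ) * n) - C) / β ≤ S (m * n) := by
    rw [div_le_iff₀ hβ]; linarith
  have hI2 : T0 + c1 * ((c4 * ((m : ℝ) * n) - C) / β) ≤ (m : ℝ) * ∫ ω, G ω ∂μ := by
    have := mul_le_mul_of_nonneg_left hSlb hc1.le
    linarith
  have hI3 : (T0 + c1 * ((c4 * ((m : ℝ) * n) - C) / β)) / m ≤ ∫ ω, G ω ∂μ := by
    rw [div_le_iff₀ hmpos]; linarith
  have hAlg : (T0 + c1 * ((c4 * ((m : ℝ) * n) - C) / β)) / m = α * n + D := by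
    rw [hαdef, hDdef]
    have hβ' : β ≠ 0 := ne_of_gt hβ
    have hm' : (m:ℝ) ≠ 0 := ne_of_gt hmpos
    field_simp
    ring
  rw [hAlg] at hI3
  -- numeric conclusion
  have hNn : (2 * (|D| + 1)) / α ≤ (n : ℝ) :=
    le_trans (Nat.le_ceil _) (Nat.cast_le.mpr hn)
  have hαn : 2 * (|D| + 1) ≤ α * n := by
    rw [div_le_iff₀ hα] at hNn; linarith
  have hD1 : -|D| ≤ D := neg_abs_le D
  have h0D : 0 ≤ |D| := abs_nonneg D
  nlinarith [hI3, hαn, hD1, h0D]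
end

section
/- Let (X_n)_{n≥0} be real random variables, m a positive integer, and c9 ≥ 0 a constant such that almost surely X_n ≤ n + c9 for all n. Set Y_n = max{X_{mn}, X_{mn+1}, …, X_{mn+m−1}} and suppose there exist c7 > 0 and an integer N such that E[Y_n] > c7·n for all n ≥ N. Then there exist constants c5 > 0 and δ > 0 such that P(limsup_{n→∞} X_n/n > c5) > δ. -/
open MeasureTheory Filter

set_option maxHeartbeats 1000000 in
/-- If a.s. `Xₙ ≤ n + c9` for all `n`, and the expectations of
`Yₙ = max { X_{m n}, …, X_{m n + m - 1} }` satisfy `E[Yₙ] > c7 * n` for all large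
`n`, then there are constants `c5 > 0` and `δ > 0` with
`P(limsup Xₙ/n > c5) > δ`. -/
theorem positive_probability_limsup {Ω : Type*} {m0 : MeasurableSpace Ω}
    {μ : Measure Ω} [IsProbabilityMeasure μ]
    (X : ℕ → Ω → ℝ) (m : ℕ) (hm : 0 < m) (c9 : ℝ) (hc9 : 0 ≤ c9)
    (hbound : ∀ᵐ ω ∂μ, ∀ n : ℕ, X n ω ≤ (n : ℝ) + c9)
    (c7 : ℝ) (hc7 : 0 < c7) (N : ℕ)
    (hY : ∀ n ≥ N,
      c7 * (n : ℝ) <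
        ∫ ω, ((Finset.range m).sup' (Finset.nonempty_range_iff.mpr hm.ne')
          fun j => X (m * n + j) ω) ∂μ) :
    ∃ c5 : ℝ, 0 < c5 ∧ ∃ δ : ℝ, 0 < δ ∧
      δ < (μ {ω | c5 < atTop.limsup fun n => X n ω / n}).toReal := by
  have hne : (Finset.range m).Nonempty := Finset.nonempty_range_iff.mpr hm.ne'
  set Y : ℕ → Ω → ℝ := fun n ω => (Finset.range m).sup' hne fun j => X (m * n + j) ω with hYdef
  have hmR : (1 : ℝ) ≤ (m : ℝ) := by exact_mod_cast hm
  -- constants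
  set c : ℝ := c7 / 2 with hc
  set δ0 : ℝ := c7 / (4 * m) with hδ0
  have hδ0pos : 0 < δ0 := by positivity
  set N1 : ℕ := max (max N 1) (2 + ⌈c9⌉₊) with hN1
  have hN1N : N ≤ N1 := le_trans (le_max_left _ _) (le_max_left _ _)
  have hN1one : 1 ≤ N1 := le_trans (le_max_right _ _) (le_max_left _ _)
  have hN1c9 : ∀ n : ℕ, N1 ≤ n → (2 : ℝ) + c9 ≤ n := by
    intro n hn
    have h1 : 2 + ⌈c9⌉₊ ≤ n := le_trans (le_max_right _ _) hn
    have h2 : c9 ≤ (⌈c9⌉₊ : ℝ) := Nat.le_ceil c9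
    have h3 : ((2 + ⌈c9⌉₊ : ℕ) : ℝ) ≤ (n : ℝ) := by exact_mod_cast h1
    push_cast at h3
    linarith
  -- integrability of Y n for n ≥ N1
  have hInt : ∀ n : ℕ, N1 ≤ n → Integrable (Y n) μ := by
    intro n hn
    by_contra h
    have h1 := hY n (le_trans hN1N hn)
    rw [integral_undef h] at h1
    have hn1 : (1 : ℝ) ≤ (n : ℝ) := by exact_mod_cast le_trans hN1one hn
    nlinarith
  -- null measurable sets
  set B : ℕ → Set Ω := fun n => {ω | c * n < Y n ω} with hB
  have hBnm : ∀ n : ℕ, N1 ≤ n → NullMeasurableSet (B n) μ := by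
    intro n hn
    have := (hInt n hn).aemeasurable.nullMeasurable
    exact this measurableSet_Ioi
  set B' : ℕ → Set Ω := fun n => toMeasurable μ (B n) with hB'
  have hB'meas : ∀ n, MeasurableSet (B' n) := fun n => measurableSet_toMeasurable μ (B n)
  -- Markov: measure lower bound
  have hmeas_lb : ∀ n : ℕ, N1 ≤ n → ENNReal.ofReal δ0 ≤ μ (B' n) := by
    intro n hn
    have hn1 : (1 : ℝ) ≤ (n : ℝ) := by exact_mod_cast le_trans hN1one hn
    set Cn : ℝ := m * n + m + c9 with hCn
    have hCnpos : 0 < Cn := by positivity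
    have hle : ∀ᵐ ω ∂μ, Y n ω ≤ c * n + Set.indicator (B' n) (fun _ => Cn) ω := by
      filter_upwards [hbound] with ω hb
      by_cases hω : ω ∈ B' n
      · rw [Set.indicator_of_mem hω]
        have hYle : Y n ω ≤ Cn := by
          apply Finset.sup'_le
          intro j hj
          have hjm : j < m := Finset.mem_range.mp hj
          have := hb (m * n + j)
          have hj' : ((m * n + j : ℕ) : ℝ) ≤ (m : ℝ) * n + m := by
            push_cast
            have : (j : ℝ) ≤ m := by exact_mod_cast hjm.le
            nlinarith
          linarith
        nlinarith
      · rw [Set.indicator_of_notMem hω]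
        have hωB : ω ∉ B n := fun h => hω (subset_toMeasurable μ (B n) h)
        simpa [hB] using hωB
    have hg_int : Integrable (fun ω => c * n + Set.indicator (B' n) (fun _ => Cn) ω) μ :=
      (integrable_const _).add ((integrable_const Cn).indicator (hB'meas n))
    have hint := hInt n hn
    have hIle : ∫ ω, Y n ω ∂μ ≤ ∫ ω, (c * n + Set.indicator (B' n) (fun _ => Cn) ω) ∂μ :=
      integral_mono_ae hint hg_int hle
    have hIeq : ∫ ω, (c * n + Set.indicator (B' n) (fun _ => Cn) ω) ∂μ
        = c * n + Cn * (μ (B' n)).toReal := by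
      rw [integral_add (integrable_const _) ((integrable_const Cn).indicator (hB'meas n)),
        integral_const, integral_indicator_const _ (hB'meas n)]
      simp [measure_univ, smul_eq_mul, mul_comm, Measure.real]
    have h1 := hY n (le_trans hN1N hn)
    rw [hIeq] at hIle
    set t : ℝ := (μ (B' n)).toReal with ht
    have htn : c * n < Cn * t := by
      have := lt_of_lt_of_le h1 hIle
      simp only [hc] at *
      linarith
    have h2c9 : (2 : ℝ) + c9 ≤ n := hN1c9 n hn
    have hδt : δ0 < t := by
      have hkey : δ0 * Cn ≤ c * n := by
        rw [hδ0, hc, hCn]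
        rw [div_mul_eq_mul_div, div_le_iff₀ (by positivity)]
        have key : (m : ℝ) * n + m + c9 ≤ 2 * m * n := by nlinarith
        nlinarith [mul_le_mul_of_nonneg_left key hc7.le]
      have : δ0 * Cn < Cn * t := lt_of_le_of_lt hkey htn
      nlinarith
    rw [ENNReal.ofReal_le_iff_le_toReal (measure_ne_top μ _)]
    exact hδt.le
  -- the limsup set
  set S : ℕ → Set Ω := fun k => ⋃ n : ℕ, B' (N1 + k + n) with hS
  have hSanti : Antitone S := by
    intro k k' hkk'
    apply Set.iUnion_subset
    intro n
    have : N1 + k' + n = N1 + k + (k' - k + n) := by omega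
    rw [this]
    exact Set.subset_iUnion (fun i => B' (N1 + k + i)) (k' - k + n)
  set T : Set Ω := ⋂ k : ℕ, S k with hT
  have hTμ : ENNReal.ofReal δ0 ≤ μ T := by
    have hST : μ T = ⨅ k, μ (S k) := by
      apply Directed.measure_iInter
      · intro k
        exact NullMeasurableSet.iUnion fun n => (hB'meas (N1 + k + n)).nullMeasurableSet
      · exact hSanti.directed_ge
      · exact ⟨0, measure_ne_top μ _⟩
    rw [hST]
    apply le_iInf
    intro k
    refine le_trans (hmeas_lb (N1 + k + 0) (by omega)) (measure_mono ?_)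
    exact Set.subset_iUnion (fun n => B' (N1 + k + n)) 0
  -- almost sure properties
  have hae : ∀ᵐ ω ∂μ, (∀ n : ℕ, X n ω ≤ (n : ℝ) + c9) ∧
      ∀ n : ℕ, N1 ≤ n → (ω ∈ B' n → c * n < Y n ω) := by
    refine hbound.and ?_
    rw [ae_all_iff]
    intro n
    by_cases hn : N1 ≤ n
    · have h1 : B' n =ᵐ[μ] B n := (hBnm n hn).toMeasurable_ae_eq
      have h2 := eventuallyEq_set.mp h1
      filter_upwards [h2] with ω hω _ hωB'
      exact (hω.mp hωB' : ω ∈ B n)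
    · filter_upwards with ω hn'
      exact absurd hn' hn
  -- conclusion
  refine ⟨c7 / (8 * m), by positivity, δ0 / 2, by positivity, ?_⟩
  set c5 : ℝ := c7 / (8 * m) with hc5
  set E : Set Ω := {ω | c5 < atTop.limsup fun n => X n ω / n} with hE
  have hTE : μ T ≤ μ E := by
    apply measure_mono_ae
    filter_upwards [hae] with ω hω hωT
    obtain ⟨hωb, hωB⟩ := hω
    -- bounded above
    have hbd : IsBoundedUnder (· ≤ ·) atTop (fun n : ℕ => X n ω / n) := by
      refine isBoundedUnder_of ⟨1 + c9, fun n => ?_⟩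
      rcases Nat.eq_zero_or_pos n with h0 | hpos
      · subst h0
        simp only [Nat.cast_zero, div_zero]
        positivity
      · have hnR : (1 : ℝ) ≤ (n : ℝ) := by exact_mod_cast hpos
        rw [div_le_iff₀ (by linarith)]
        have := hωb n
        nlinarith
    -- frequently large
    have hfreq : ∃ᶠ k in atTop, 2 * c5 ≤ X k ω / k := by
      rw [Filter.frequently_atTop]
      intro K
      have hωS : ω ∈ S K := Set.mem_iInter.mp hωT K
      obtain ⟨nset, ⟨n, rfl⟩, hωn⟩ := hωS
      set n' : ℕ := N1 + K + n with hn'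
      have hn'N1 : N1 ≤ n' := by omega
      have hYlarge : c * n' < Y n' ω := hωB n' hn'N1 hωn
      obtain ⟨j, hj, hjeq⟩ := Finset.exists_mem_eq_sup' hne fun j => X (m * n' + j) ω
      have hjm : j < m := Finset.mem_range.mp hj
      refine ⟨m * n' + j, ?_, ?_⟩
      · have : n' ≤ m * n' := Nat.le_mul_of_pos_left n' hm
        omega
      · have hk'pos : 0 < m * n' + j := by positivity
        have hk'R : (0 : ℝ) < ((m * n' + j : ℕ) : ℝ) := by exact_mod_cast hk'pos
        rw [le_div_iff₀ hk'R]
        have hXlarge : c * n' < X (m * n' + j) ω := by rw [← hjeq]; exact hYlarge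
        have hn'1 : (1 : ℝ) ≤ (n' : ℝ) := by exact_mod_cast le_trans hN1one hn'N1
        have hk'le : ((m * n' + j : ℕ) : ℝ) ≤ (m : ℝ) * n' + m := by
          push_cast
          have : (j : ℝ) ≤ m := by exact_mod_cast hjm.le
          linarith
        have hc5m : c5 * (8 * m) = c7 := by rw [hc5]; field_simp
        have hc5pos : 0 < c5 := by rw [hc5]; positivity
        have h1 : 2 * c5 * ((m * n' + j : ℕ) : ℝ) ≤ 2 * c5 * ((m : ℝ) * n' + m) :=
          mul_le_mul_of_nonneg_left hk'le (by positivity)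
        have h2 : 2 * c5 * ((m : ℝ) * n' + m) ≤ 4 * c5 * m * n' := by
          nlinarith [mul_nonneg (mul_nonneg hc5pos.le (by positivity : (0:ℝ) ≤ (m:ℝ)))
            (sub_nonneg.mpr hn'1)]
        have h3 : c * (n' : ℝ) = 4 * c5 * m * n' := by
          rw [hc, ← hc5m]; ring
        nlinarith
    have hlim : 2 * c5 ≤ atTop.limsup fun n : ℕ => X n ω / n :=
      le_limsup_of_frequently_le hfreq hbd
    have : c5 < atTop.limsup fun n : ℕ => X n ω / n := by
      have hc5pos : 0 < c5 := by rw [hc5]; positivity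
      linarith
    exact this
  have hEμ : ENNReal.ofReal δ0 ≤ μ E := le_trans hTμ hTE
  have hEfin : μ E ≠ ⊤ := measure_ne_top μ E
  have : δ0 ≤ (μ E).toReal := by
    rw [← ENNReal.ofReal_le_iff_le_toReal hEfin]
    exact hEμ
  linarith
end
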